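/- Consider the three quantities p_new(σ) = α(σ)·(2π(σ+ρ))^{-d/2}·exp(-a/(2(σ+ρ))), p_inst(σ) = c·(2πσ)^{-d/2}·exp(-b/(2σ)), with α(σ) = (1+ρ/σ)^{d/2}·exp(-λ/(2σ)), c > 0, ρ > 0, a, b ≥ 0. Then lim_{σ→0⁺} p_new(σ)/p_inst(σ) = ∞ if λ < b, and = 0 if λ > b (when a < λ, the cross terms vanish appropriately); in particular, the maximizer of the assignment probabilities in the σ → 0⁺ limit is the new cluster if and only if λ < b. -/

import Mathlib

open Filter Topology Real

/-- Asymptotics of the ratio of the unnormalized Gibbs assignment weights for a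
new cluster, p_new(σ) = α(σ)·(2π(σ+ρ))^{-d/2}·exp(-a/(2(σ+ρ))) with
α(σ) = (1+ρ/σ)^{d/2}·exp(-λ/(2σ)), versus an instantiated cluster,
p_inst(σ) = c·(2πσ)^{-d/2}·exp(-b/(2σ)): as σ → 0⁺ the ratio tends to ∞ if
λ < b and to 0 if λ > b; in particular in the limit the new cluster wins
(has larger weight) iff λ < b. -/
theorem new_vs_instantiated_ratio_limit {d : ℕ} (hd : 1 ≤ d)
    (ρ lam a b c : ℝ) (hρ : 0 < ρ) (hc : 0 < c) (ha : 0 ≤ a) (hb : 0 ≤ b)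
    (halam : a < lam) :
    let pnew : ℝ → ℝ := fun σ =>
      ((1 + ρ / σ) ^ ((d : ℝ) / 2) * Real.exp (-lam / (2 * σ))) *
        (2 * π * (σ + ρ)) ^ (-(d : ℝ) / 2) * Real.exp (-a / (2 * (σ + ρ)))
    let pinst : ℝ → ℝ := fun σ =>
      c * (2 * π * σ) ^ (-(d : ℝ) / 2) * Real.exp (-b / (2 * σ))
    (lam < b → Tendsto (fun σ => pnew σ / pinst σ) (𝓝[>] 0) atTop) ∧
    (b < lam → Tendsto (fun σ => pnew σ / pinst σ) (𝓝[>] 0) (𝓝 0)) := by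
  intro pnew pinst
  set t : ℝ := (d : ℝ) / 2 with ht
  have key : ∀ σ : ℝ, 0 < σ →
      pnew σ / pinst σ =
        Real.exp ((b - lam) / (2 * σ)) * Real.exp (-a / (2 * (σ + ρ))) / c := by
    intro σ hσ
    have hσρ : 0 < σ + ρ := by linarith
    have h1 : (1 : ℝ) + ρ / σ = (σ + ρ) / σ := by field_simp
    have h2 : 2 * π * (σ + ρ) = (2 * π * σ) * ((σ + ρ) / σ) := by field_simp
    have hq : 0 < (σ + ρ) / σ := by positivity
    have h3 : (2 * π * (σ + ρ)) ^ (-t) = (2 * π * σ) ^ (-t) * ((σ + ρ) / σ) ^ (-t) := by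
      rw [h2, Real.mul_rpow (by positivity) (le_of_lt hq)]
    have h4 : ((σ + ρ) / σ) ^ t * ((σ + ρ) / σ) ^ (-t) = 1 := by
      rw [← Real.rpow_add hq]; simp
    show ((1 + ρ / σ) ^ t * Real.exp (-lam / (2 * σ))) *
        (2 * π * (σ + ρ)) ^ (-(d : ℝ) / 2) * Real.exp (-a / (2 * (σ + ρ))) /
        (c * (2 * π * σ) ^ (-(d : ℝ) / 2) * Real.exp (-b / (2 * σ))) = _
    rw [show (-(d:ℝ)/2 : ℝ) = -t from by rw [ht]; ring, h1, h3]
    rw [div_eq_div_iff (by positivity) hc.ne']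
    have hbb : Real.exp ((b - lam) / (2 * σ)) * Real.exp (-b / (2 * σ)) =
        Real.exp (-lam / (2 * σ)) := by
      rw [← Real.exp_add]; congr 1; field_simp; ring
    calc ((σ + ρ) / σ) ^ t * Real.exp (-lam / (2 * σ)) *
          ((2 * π * σ) ^ (-t) * ((σ + ρ) / σ) ^ (-t)) * Real.exp (-a / (2 * (σ + ρ))) * c
        = (((σ + ρ) / σ) ^ t * ((σ + ρ) / σ) ^ (-t)) * (2 * π * σ) ^ (-t) *
          (Real.exp (-lam / (2 * σ)) * Real.exp (-a / (2 * (σ + ρ))) * c) := by ring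
      _ = (2 * π * σ) ^ (-t) *
          (Real.exp (-lam / (2 * σ)) * Real.exp (-a / (2 * (σ + ρ))) * c) := by rw [h4]; ring
      _ = Real.exp ((b - lam) / (2 * σ)) * Real.exp (-a / (2 * (σ + ρ))) *
          (c * (2 * π * σ) ^ (-t) * Real.exp (-b / (2 * σ))) := by
            rw [show Real.exp ((b - lam) / (2 * σ)) * Real.exp (-a / (2 * (σ + ρ))) *
              (c * (2 * π * σ) ^ (-t) * Real.exp (-b / (2 * σ))) =
              (Real.exp ((b - lam) / (2 * σ)) * Real.exp (-b / (2 * σ))) *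
              Real.exp (-a / (2 * (σ + ρ))) * c * (2 * π * σ) ^ (-t) by ring, hbb]
            ring
  have heq : (fun σ => pnew σ / pinst σ) =ᶠ[𝓝[>] (0:ℝ)]
      (fun σ => Real.exp ((b - lam) / (2 * σ)) * Real.exp (-a / (2 * (σ + ρ))) / c) :=
    eventually_nhdsWithin_of_forall (fun σ hσ => key σ hσ)
  have hfac : Tendsto (fun σ : ℝ => Real.exp (-a / (2 * (σ + ρ))) / c) (𝓝[>] 0)
      (𝓝 (Real.exp (-a / (2 * ρ)) / c)) := by
    have : Tendsto (fun σ : ℝ => Real.exp (-a / (2 * (σ + ρ))) / c) (𝓝 0)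
        (𝓝 (Real.exp (-a / (2 * (0 + ρ))) / c)) := by
      apply Tendsto.div_const
      apply (Real.continuous_exp.tendsto _).comp
      apply Tendsto.div tendsto_const_nhds
      · exact (continuous_const.mul (continuous_id.add continuous_const)).tendsto 0
      · positivity
    simpa using this.mono_left nhdsWithin_le_nhds
  have hinv : Tendsto (fun σ : ℝ => σ⁻¹) (𝓝[>] (0:ℝ)) atTop := tendsto_inv_nhdsGT_zero
  have hrw : ∀ σ : ℝ, σ⁻¹ * ((b - lam) / 2) = (b - lam) / (2 * σ) := by
    intro σ
    rw [div_eq_mul_inv, div_eq_mul_inv, mul_inv_rev]; ring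
  constructor
  · intro hlt
    have h1 : Tendsto (fun σ : ℝ => (b - lam) / (2 * σ)) (𝓝[>] 0) atTop :=
      (hinv.atTop_mul_const (by linarith)).congr hrw
    have h2 : Tendsto (fun σ : ℝ => Real.exp ((b - lam) / (2 * σ))) (𝓝[>] 0) atTop :=
      Real.tendsto_exp_atTop.comp h1
    have h3 : Tendsto (fun σ : ℝ => Real.exp ((b - lam) / (2 * σ)) *
        Real.exp (-a / (2 * (σ + ρ))) / c) (𝓝[>] 0) atTop :=
      (h2.atTop_mul_pos (by positivity) hfac).congr (fun σ => (mul_div_assoc _ _ _).symm)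
    exact h3.congr' heq.symm
  · intro hlt
    have h1 : Tendsto (fun σ : ℝ => (b - lam) / (2 * σ)) (𝓝[>] 0) atBot :=
      (hinv.atTop_mul_const_of_neg (by linarith)).congr hrw
    have h2 : Tendsto (fun σ : ℝ => Real.exp ((b - lam) / (2 * σ))) (𝓝[>] 0) (𝓝 0) :=
      Real.tendsto_exp_atBot.comp h1
    have h3 : Tendsto (fun σ : ℝ => Real.exp ((b - lam) / (2 * σ)) *
        Real.exp (-a / (2 * (σ + ρ))) / c) (𝓝[>] 0) (𝓝 0) := by
      have := (h2.mul hfac).congr (fun σ => (mul_div_assoc _ _ _).symm)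
      simpa using this
    exact h3.congr' heq.symm
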